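/- The function x ↦ log ρ(x) − log |x|, defined on ℝ² ∖ (L ∪ {0}), extends to a function that is harmonic on the open set ℝ² ∖ L* (in particular, the singularity at the origin is removable). -/

import Mathlib

/-- The singular lattice `L = ℤ × {0} ⊆ ℝ²`. -/
def L : Set (ℝ × ℝ) := {p | ∃ n : ℤ, p = ((n : ℝ), 0)}

/-- `L* = L \ {(0,0)}`. -/
def Lstar : Set (ℝ × ℝ) := L \ {(0, 0)}

/-- `ρ(x) = (sin²(πx₁) + sinh²(πx₂))^{1/2}`. -/
noncomputable def rho (x : ℝ × ℝ) : ℝ :=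
  Real.sqrt (Real.sin (Real.pi * x.1) ^ 2 + Real.sinh (Real.pi * x.2) ^ 2)

/-- A real-valued function is harmonic on an open set `U ⊆ ℝ²` if it is `C²` on `U`
and its Laplacian vanishes on `U`. -/
def HarmonicOn (f : ℝ × ℝ → ℝ) (U : Set (ℝ × ℝ)) : Prop :=
  ContDiffOn ℝ 2 f U ∧
  ∀ x ∈ U, fderiv ℝ (fun y => fderiv ℝ f y (1, 0)) x (1, 0) +
    fderiv ℝ (fun y => fderiv ℝ f y (0, 1)) x (0, 1) = 0

open Complex Metric Set Filter Topology Real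

/-- The continuous linear map `(a, b) ↦ a + b i`. -/
noncomputable def eC : (ℝ × ℝ) →L[ℝ] ℂ := Complex.equivRealProdCLM.symm.toContinuousLinearMap

lemma eC_apply (p : ℝ × ℝ) : eC p = (p.1 : ℂ) + (p.2 : ℂ) * Complex.I :=
  Complex.equivRealProdCLM_symm_apply p

lemma eC_re (p : ℝ × ℝ) : (eC p).re = p.1 := by simp [eC_apply]

lemma eC_im (p : ℝ × ℝ) : (eC p).im = p.2 := by simp [eC_apply]

lemma eC_one : eC ((1 : ℝ), (0 : ℝ)) = 1 := by
  rw [eC_apply]; simp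

lemma eC_I : eC ((0 : ℝ), (1 : ℝ)) = Complex.I := by
  rw [eC_apply]; simp

/-- For a complex-differentiable function `h`, the real directional derivative of
`y ↦ Re (h (eC y))`. -/
lemma fderiv_re_comp {h : ℂ → ℂ} {x : ℝ × ℝ} (hd : DifferentiableAt ℂ h (eC x)) (v : ℝ × ℝ) :
    fderiv ℝ (fun y => (h (eC y)).re) x v = (deriv h (eC x) * eC v).re := by
  have h3 : HasFDerivAt (fun y => (h (eC y)).re)
      (Complex.reCLM.comp (((fderiv ℂ h (eC x)).restrictScalars ℝ).comp
        (eC : (ℝ × ℝ) →L[ℝ] ℂ))) x := by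
    have h1 := (hd.hasFDerivAt.restrictScalars ℝ).comp x eC.hasFDerivAt
    exact Complex.reCLM.hasFDerivAt.comp x h1
  have e3 : (fderiv ℂ h (eC x)) (eC v) = deriv h (eC x) * eC v := by
    have := (fderiv ℂ h (eC x)).map_smul (eC v) (1 : ℂ)
    simp only [smul_eq_mul, mul_one] at this
    rw [this, fderiv_apply_one_eq_deriv, mul_comm]
  rw [h3.fderiv]
  simp only [ContinuousLinearMap.comp_apply, ContinuousLinearMap.coe_restrictScalars']
  simp [e3]

/-- The Laplacian of the real part of a holomorphic function vanishes. -/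
lemma lap_re_comp {N : Set ℂ} (hN : IsOpen N) {h : ℂ → ℂ} (hd : DifferentiableOn ℂ h N)
    {x : ℝ × ℝ} (hx : eC x ∈ N) :
    fderiv ℝ (fun y => fderiv ℝ (fun p => (h (eC p)).re) y (1, 0)) x (1, 0) +
      fderiv ℝ (fun y => fderiv ℝ (fun p => (h (eC p)).re) y (0, 1)) x (0, 1) = 0 := by
  have han : AnalyticOnNhd ℂ h N := hd.analyticOnNhd hN
  have hd1 : ∀ z ∈ N, DifferentiableAt ℂ h z := fun z hz => hd.differentiableAt (hN.mem_nhds hz)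
  have hd2 : ∀ z ∈ N, DifferentiableAt ℂ (deriv h) z := fun z hz =>
    ((han.deriv z hz)).differentiableAt
  have hmem : eC ⁻¹' N ∈ 𝓝 x := (hN.preimage eC.continuous).mem_nhds hx
  have E1 : (fun y => fderiv ℝ (fun p => (h (eC p)).re) y ((1 : ℝ), (0 : ℝ))) =ᶠ[𝓝 x]
      fun y => ((deriv h) (eC y)).re := by
    filter_upwards [hmem] with y hy
    rw [fderiv_re_comp (hd1 _ hy) ((1 : ℝ), (0 : ℝ)), eC_one, mul_one]
  have E2 : (fun y => fderiv ℝ (fun p => (h (eC p)).re) y ((0 : ℝ), (1 : ℝ))) =ᶠ[𝓝 x]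
      fun y => ((fun w => deriv h w * Complex.I) (eC y)).re := by
    filter_upwards [hmem] with y hy
    rw [fderiv_re_comp (hd1 _ hy) ((0 : ℝ), (1 : ℝ)), eC_I]
  rw [E1.fderiv_eq, E2.fderiv_eq,
    fderiv_re_comp (hd2 _ hx) ((1 : ℝ), (0 : ℝ)),
    fderiv_re_comp (h := fun w => deriv h w * Complex.I) ((hd2 _ hx).mul_const _)
      ((0 : ℝ), (1 : ℝ)), eC_one, eC_I, mul_one, deriv_mul_const (hd2 _ hx)]
  have : deriv (deriv h) (eC x) * Complex.I * Complex.I = -(deriv (deriv h) (eC x)) := by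
    rw [mul_assoc, Complex.I_mul_I, mul_neg_one]
  rw [this, Complex.neg_re]
  ring

/-- The open set `ℂ \ (ℤ \ {0})`. -/
def Vset : Set ℂ := {z | Complex.sin ((Real.pi : ℂ) * z) ≠ 0} ∪ Metric.ball 0 1

lemma isOpen_Vset : IsOpen Vset := by
  refine IsOpen.union ?_ Metric.isOpen_ball
  exact isOpen_ne.preimage (Complex.continuous_sin.comp (continuous_const.mul continuous_id))

lemma sin_pi_mul_eq_zero_iff {z : ℂ} :
    Complex.sin ((Real.pi : ℂ) * z) = 0 ↔ ∃ n : ℤ, z = (n : ℂ) := by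
  rw [Complex.sin_eq_zero_iff]
  have hπ : (Real.pi : ℂ) ≠ 0 := Complex.ofReal_ne_zero.mpr Real.pi_ne_zero
  constructor
  · rintro ⟨k, hk⟩
    refine ⟨k, mul_left_cancel₀ hπ ?_⟩
    rw [hk]; ring
  · rintro ⟨n, rfl⟩
    exact ⟨n, by ring⟩

lemma eC_eq_int_iff {x : ℝ × ℝ} {n : ℤ} : eC x = (n : ℂ) ↔ x = ((n : ℝ), 0) := by
  rw [Complex.ext_iff, eC_re, eC_im, Prod.ext_iff]
  simp

lemma mem_Vset_iff {x : ℝ × ℝ} : eC x ∈ Vset ↔ x ∉ Lstar := by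
  constructor
  · intro hv hls
    obtain ⟨⟨n, rfl⟩, hne⟩ := hls
    have hn : n ≠ 0 := fun h => hne (by simp [h])
    have h1 : eC ((n : ℝ), (0 : ℝ)) = (n : ℂ) := eC_eq_int_iff.mpr rfl
    rcases hv with hv | hv
    · exact hv (sin_pi_mul_eq_zero_iff.mpr ⟨n, h1⟩)
    · rw [Metric.mem_ball, dist_zero_right, h1] at hv
      have : (1 : ℝ) ≤ ‖(n : ℂ)‖ := by
        rw [Complex.norm_intCast]
        exact_mod_cast Int.one_le_abs hn
      linarith
  · intro hls
    by_cases hsin : Complex.sin ((Real.pi : ℂ) * eC x) = 0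
    · obtain ⟨n, hn⟩ := sin_pi_mul_eq_zero_iff.mp hsin
      have hx : x = ((n : ℝ), 0) := eC_eq_int_iff.mp hn
      have hn0 : n = 0 := by
        by_contra h
        exact hls ⟨⟨n, hx⟩, fun hc => h (by
          rw [hx] at hc
          have : (n : ℝ) = 0 := congrArg Prod.fst hc
          exact_mod_cast this)⟩
      right
      rw [hn, hn0]
      simp
    · exact Or.inl hsin

/-- The entire extension of `sin (π z) / z`. -/
noncomputable def Fc : ℂ → ℂ := fun z => if z = 0 then (Real.pi : ℂ) else Complex.sin ((Real.pi : ℂ) * z) / z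

lemma Fc_diff_ne_zero {z : ℂ} (hz : z ≠ 0) : DifferentiableAt ℂ Fc z := by
  have hev : Fc =ᶠ[𝓝 z] fun w => Complex.sin ((Real.pi : ℂ) * w) / w := by
    filter_upwards [isOpen_ne.mem_nhds hz] with w hw
    simp [Fc, hw]
  exact DifferentiableAt.congr_of_eventuallyEq
    (((Complex.differentiable_sin.comp ((differentiable_id.const_mul _))) z).div
      differentiableAt_id hz) hev

lemma Fc_continuousAt_zero : ContinuousAt Fc 0 := by
  have hda : HasDerivAt (fun w : ℂ => Complex.sin ((Real.pi : ℂ) * w)) (Real.pi : ℂ) 0 := by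
    have h1 : HasDerivAt (fun w : ℂ => (Real.pi : ℂ) * w) (Real.pi : ℂ) 0 :=
      (hasDerivAt_id 0).const_mul _ |>.congr_deriv (by simp)
    have h2 := (Complex.hasDerivAt_sin ((Real.pi : ℂ) * 0)).comp 0 h1
    simpa [Function.comp_def] using h2
  rw [hasDerivAt_iff_tendsto_slope] at hda
  rw [← continuousWithinAt_compl_self]
  have heq : (slope (fun w : ℂ => Complex.sin ((Real.pi : ℂ) * w)) 0) =ᶠ[𝓝[≠] 0] Fc := by
    filter_upwards [self_mem_nhdsWithin] with w hw
    have hw' : w ≠ 0 := hw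
    simp [slope_def_field, Fc, hw']
  have : Filter.Tendsto Fc (𝓝[≠] 0) (𝓝 (Real.pi : ℂ)) := hda.congr' heq
  simpa [ContinuousWithinAt, Fc] using this

lemma Fc_diffOn : DifferentiableOn ℂ Fc Vset := by
  intro z hz
  rcases eq_or_ne z 0 with rfl | hz0
  · have hball : DifferentiableOn ℂ Fc (Metric.ball (0 : ℂ) 1 \ {0}) := fun w hw =>
      (Fc_diff_ne_zero hw.2).differentiableWithinAt
    have := (Complex.differentiableOn_compl_singleton_and_continuousAt_iff
      (Metric.ball_mem_nhds (0 : ℂ) one_pos)).mp ⟨hball, Fc_continuousAt_zero⟩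
    exact ((this.differentiableAt (Metric.ball_mem_nhds (0 : ℂ) one_pos))).differentiableWithinAt
  · exact (Fc_diff_ne_zero hz0).differentiableWithinAt

lemma Fc_ne_zero {z : ℂ} (hz : z ∈ Vset) : Fc z ≠ 0 := by
  rcases eq_or_ne z 0 with rfl | hz0
  · simp [Fc, Complex.ofReal_ne_zero.mpr Real.pi_ne_zero]
  · have hsin : Complex.sin ((Real.pi : ℂ) * z) ≠ 0 := by
      rcases hz with hz | hz
      · exact hz
      · intro hs
        obtain ⟨n, rfl⟩ := sin_pi_mul_eq_zero_iff.mp hs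
        have hn : n ≠ 0 := fun h => hz0 (by simp [h])
        rw [Metric.mem_ball, dist_zero_right] at hz
        have : (1 : ℝ) ≤ ‖(n : ℂ)‖ := by
          rw [Complex.norm_intCast]
          exact_mod_cast Int.one_le_abs hn
        linarith
    simp only [Fc, if_neg hz0]
    exact div_ne_zero hsin hz0

/-- `log ρ(x) - log |x|`, defined off `L` (note `ℝ² \ (L ∪ {0}) = ℝ² \ L`), extends to a
function harmonic on `ℝ² \ L*`; the singularity at the origin is removable. -/
theorem stmt15 : ∃ g : ℝ × ℝ → ℝ,
    (∀ x : ℝ × ℝ, x ∉ L → g x = Real.log (rho x) - Real.log (Real.sqrt (x.1 ^ 2 + x.2 ^ 2))) ∧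
    HarmonicOn g Lstarᶜ := by
  refine ⟨fun x => Real.log (‖Fc (eC x)‖), ?_, ?_, ?_⟩
  · -- agreement with log ρ − log |x| off L
    intro x hxL
    have hz0 : eC x ≠ 0 := by
      intro h
      exact hxL ⟨0, eC_eq_int_iff.mp (by simpa using h)⟩
    have hsin : Complex.sin ((Real.pi : ℂ) * eC x) ≠ 0 := by
      intro hs
      obtain ⟨n, hn⟩ := sin_pi_mul_eq_zero_iff.mp hs
      exact hxL ⟨n, eC_eq_int_iff.mp hn⟩
    have habs : ‖Complex.sin ((Real.pi : ℂ) * eC x)‖ = rho x := by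
      have harg : (Real.pi : ℂ) * eC x =
          ((Real.pi * x.1 : ℝ) : ℂ) + ((Real.pi * x.2 : ℝ) : ℂ) * Complex.I := by
        rw [eC_apply]; push_cast; ring
      have hsin2 : Complex.sin ((Real.pi : ℂ) * eC x) =
          ((Real.sin (Real.pi * x.1) * Real.cosh (Real.pi * x.2) : ℝ) : ℂ) +
          ((Real.cos (Real.pi * x.1) * Real.sinh (Real.pi * x.2) : ℝ) : ℂ) * Complex.I := by
        rw [harg, Complex.sin_add, Complex.sin_mul_I, Complex.cos_mul_I]
        simp only [← Complex.ofReal_sin, ← Complex.ofReal_cos, ← Complex.ofReal_sinh,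
          ← Complex.ofReal_cosh]
        push_cast
        ring
      rw [hsin2, Complex.norm_def, rho]
      congr 1
      rw [Complex.normSq_apply]
      simp only [Complex.add_re, Complex.add_im, Complex.ofReal_re, Complex.ofReal_im,
        Complex.mul_re, Complex.mul_im, Complex.I_re, Complex.I_im]
      have h1 := Real.sin_sq_add_cos_sq (Real.pi * x.1)
      have h2 := Real.cosh_sq (Real.pi * x.2)
      nlinarith [Real.sinh_sq (Real.pi * x.2)]
    have habsz : ‖eC x‖ = Real.sqrt (x.1 ^ 2 + x.2 ^ 2) := by
      rw [Complex.norm_def, Complex.normSq_apply, eC_re, eC_im]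
      ring_nf
    show Real.log (‖Fc (eC x)‖) = _
    rw [show Fc (eC x) = Complex.sin ((Real.pi : ℂ) * eC x) / eC x from if_neg hz0,
      norm_div, Real.log_div (by simpa using hsin) (by simpa using hz0), habs, habsz]
  · -- C² smoothness
    have hg_eq : (fun x => Real.log (‖Fc (eC x)‖)) =
        fun x => Real.log (Complex.normSq (Fc (eC x))) / 2 := by
      funext x
      rw [Complex.norm_def, Real.log_sqrt (Complex.normSq_nonneg _)]
    rw [hg_eq]
    intro x hx
    have hx' : eC x ∈ Vset := mem_Vset_iff.mpr hx
    have hF2 : ContDiffAt ℝ 2 Fc (eC x) :=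
      ((Fc_diffOn.analyticOnNhd isOpen_Vset (eC x) hx').contDiffAt).restrict_scalars ℝ
    have hnormSq : ContDiff ℝ 2 (Complex.normSq : ℂ → ℝ) := by
      have : (Complex.normSq : ℂ → ℝ) = fun z => z.re * z.re + z.im * z.im :=
        funext Complex.normSq_apply
      rw [this]
      exact (Complex.reCLM.contDiff.mul Complex.reCLM.contDiff).add
        (Complex.imCLM.contDiff.mul Complex.imCLM.contDiff)
    have hlog : ContDiffAt ℝ 2 Real.log (Complex.normSq (Fc (eC x))) :=
      Real.contDiffAt_log.mpr (ne_of_gt (Complex.normSq_pos.mpr (Fc_ne_zero hx')))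
    exact ((hlog.comp x ((hnormSq.contDiffAt).comp x
      (hF2.comp x eC.contDiff.contDiffAt))).div_const 2).contDiffWithinAt
  · -- Laplacian vanishes
    intro x hx
    have hx' : eC x ∈ Vset := mem_Vset_iff.mpr hx
    set w₀ : ℂ := Fc (eC x) with hw₀def
    have hw₀ : w₀ ≠ 0 := Fc_ne_zero hx'
    have hFc : ContinuousAt Fc (eC x) :=
      (Fc_diffOn.differentiableAt (isOpen_Vset.mem_nhds hx')).continuousAt
    have hball : Fc ⁻¹' (Metric.ball w₀ (‖w₀‖)) ∈ 𝓝 (eC x) :=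
      hFc.preimage_mem_nhds (Metric.ball_mem_nhds _ (norm_pos_iff.mpr hw₀))
    obtain ⟨N, hNsub, hNopen, hNx⟩ :=
      _root_.mem_nhds_iff.mp (Filter.inter_mem (isOpen_Vset.mem_nhds hx') hball)
    set h : ℂ → ℂ := fun w => Complex.log (Fc w / w₀) with hhdef
    have hdh : DifferentiableOn ℂ h N := by
      intro w hw
      have hwv := (hNsub hw).1
      have hwb := (hNsub hw).2
      have hlt : ‖Fc w / w₀ - 1‖ < 1 := by
        rw [div_sub_one hw₀, norm_div]
        rw [Set.mem_preimage, Metric.mem_ball, Complex.dist_eq] at hwb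
        rw [div_lt_one (norm_pos_iff.mpr hw₀)]
        exact hwb
      have hslit : Fc w / w₀ ∈ Complex.slitPlane := by
        rw [Complex.mem_slitPlane_iff]
        left
        have h1 : (1 - Fc w / w₀).re ≤ ‖1 - Fc w / w₀‖ := Complex.re_le_norm _
        rw [norm_sub_rev] at h1
        have h2 : (1 - Fc w / w₀).re = 1 - (Fc w / w₀).re := by simp
        linarith
      have hFw : DifferentiableAt ℂ Fc w := Fc_diffOn.differentiableAt (isOpen_Vset.mem_nhds hwv)
      exact ((Complex.differentiableAt_log hslit).comp w (hFw.div_const w₀)).differentiableWithinAt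
    have hNx' : eC x ∈ N := hNx
    have hg_loc : ∀ y ∈ eC ⁻¹' N,
        Real.log (‖Fc (eC y)‖) =
          (h (eC y)).re + Real.log (‖w₀‖) := by
      intro y hy
      have hyv := (hNsub hy).1
      rw [hhdef]
      simp only
      rw [Complex.log_re, norm_div,
        Real.log_div (by simpa using Fc_ne_zero hyv) (by simpa using hw₀)]
      ring
    have hmemN : eC ⁻¹' N ∈ 𝓝 x := (hNopen.preimage eC.continuous).mem_nhds hNx'
    have E : (fun y => Real.log (‖Fc (eC y)‖)) =ᶠ[𝓝 x]
        (fun y => (h (eC y)).re + Real.log (‖w₀‖)) := by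
      filter_upwards [hmemN] with y hy
      exact hg_loc y hy
    have Efd := E.fderiv (𝕜 := ℝ)
    have key : ∀ v : ℝ × ℝ,
        fderiv ℝ (fun y => fderiv ℝ (fun p => Real.log (‖Fc (eC p)‖)) y v) x v =
        fderiv ℝ (fun y => fderiv ℝ (fun p => (h (eC p)).re) y v) x v := by
      intro v
      have E2 : (fun y => fderiv ℝ (fun p => Real.log (‖Fc (eC p)‖)) y v) =ᶠ[𝓝 x]
          (fun y => fderiv ℝ (fun p => (h (eC p)).re) y v) := by
        filter_upwards [Efd] with y hy
        rw [hy, fderiv_add_const]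
      rw [E2.fderiv_eq]
    rw [key ((1 : ℝ), (0 : ℝ)), key ((0 : ℝ), (1 : ℝ))]
    exact lap_re_comp hNopen hdh hNx'
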